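/- Let R be a normal ℕ-graded domain of Krull dimension 2 with irredundant grading, finitely generated as an algebra over its degree-0 component R_0, where R_0 is an algebraically closed field k. Suppose x ∈ R_d is a prime element for some d > 0, and set s := gcd{n ∈ ℕ : (R/xR)_n ≠ 0}. Then lim_{t→1⁻} (1−t)² · Σ_{n≥0} (dim_k R_n) tⁿ = 1/(sd), where the sum is the Hilbert series of R, convergent for 0 ≤ t < 1. -/

import Mathlib

open Filter DirectSum Set

section Stmt18Aux

variable {k R : Type*} [Field k] [CommRing R] [Algebra k R]
variable (𝒜 : ℕ → Submodule k R) [GradedAlgebra 𝒜]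

set_option linter.unusedSectionVars false

lemma stmt18_mem_span_x {d : ℕ} {x : R} (hxd : x ∈ 𝒜 d)
    {n : ℕ} {r : R} (hr : r ∈ 𝒜 n) (hrI : r ∈ Ideal.span {x}) :
    ∃ y ∈ 𝒜 (n - d), r = x * y := by
  classical
  obtain ⟨c, rfl⟩ := Ideal.mem_span_singleton'.mp hrI
  by_cases hn : d ≤ n
  · refine ⟨DirectSum.decompose 𝒜 c (n - d), Submodule.coe_mem _, ?_⟩
    have h1 : (DirectSum.decompose 𝒜 (c * x) n : R) = c * x :=
      DirectSum.decompose_of_mem_same 𝒜 hr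
    have h2 : (DirectSum.decompose 𝒜 (c * x) ((n - d) + d) : R) =
        (DirectSum.decompose 𝒜 c (n - d) : R) * x :=
      DirectSum.coe_decompose_mul_add_of_right_mem 𝒜 hxd
    rw [Nat.sub_add_cancel hn] at h2
    rw [← h1, h2, mul_comm]
  · refine ⟨0, Submodule.zero_mem _, ?_⟩
    rw [mul_zero]
    have h1 : (DirectSum.decompose 𝒜 (c * x) n : R) = c * x :=
      DirectSum.decompose_of_mem_same 𝒜 hr
    have hc : c * x = ∑ j ∈ (DirectSum.decompose 𝒜 c).support,
        ((DirectSum.decompose 𝒜 c j : R) * x) := by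
      rw [← Finset.sum_mul, DirectSum.sum_support_decompose]
    have h2 : GradedRing.proj 𝒜 n (c * x) = 0 := by
      conv_lhs => rw [hc]
      rw [map_sum]
      apply Finset.sum_eq_zero
      intro j _
      rw [GradedRing.proj_apply]
      exact DirectSum.decompose_of_mem_ne 𝒜
        (SetLike.mul_mem_graded (Submodule.coe_mem _) hxd) (by omega)
    rw [← h1, ← GradedRing.proj_apply, h2]

lemma stmt18_small {d : ℕ} {x : R} (hxd : x ∈ 𝒜 d) {n : ℕ} (hn : ¬ d ≤ n)
    {r : R} (hr : r ∈ 𝒜 n) (hrI : r ∈ Ideal.span {x}) : r = 0 := by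
  obtain ⟨y, hy, rfl⟩ := stmt18_mem_span_x 𝒜 hxd hr hrI
  have hnd : n - d = 0 := by omega
  rw [hnd] at hy
  have hmem : x * y ∈ 𝒜 d := by
    have := SetLike.mul_mem_graded hxd hy
    simpa using this
  have := DirectSum.decompose_of_mem_ne 𝒜 hmem (show d ≠ n by omega)
  rwa [DirectSum.decompose_of_mem_same 𝒜 hr] at this

-- shared counting lemma


variable [IsDomain R]

lemma stmt18_mem_irrelevant {n : ℕ} (hn : 0 < n) {v : R} (hv : v ∈ 𝒜 n) :
    v ∈ HomogeneousIdeal.irrelevant 𝒜 := by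
  rw [HomogeneousIdeal.mem_irrelevant_iff, GradedRing.proj_apply]
  exact DirectSum.decompose_of_mem_ne 𝒜 hv (by omega)

lemma stmt18_irrelevant_ne_top [Nontrivial R] :
    (HomogeneousIdeal.irrelevant 𝒜).toIdeal ≠ ⊤ := by
  intro h
  have h1 : (1 : R) ∈ HomogeneousIdeal.irrelevant 𝒜 := by
    rw [← HomogeneousIdeal.mem_iff, h]; trivial
  rw [HomogeneousIdeal.mem_irrelevant_iff, GradedRing.proj_apply] at h1
  have := DirectSum.decompose_of_mem_same 𝒜 (SetLike.one_mem_graded 𝒜)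
  rw [h1] at this
  exact one_ne_zero this.symm

-- homogeneous proper primes are inside irrelevant, given 𝒜 0 = k·1

lemma stmt18_homogeneous_prime_le_irrelevant
    (h0 : 𝒜 0 = Submodule.span k {1}) (q : Ideal R) (hq : q.IsHomogeneous 𝒜)
    (hqt : q ≠ ⊤) : q ≤ (HomogeneousIdeal.irrelevant 𝒜).toIdeal := by
  intro r hr
  rw [HomogeneousIdeal.mem_iff, HomogeneousIdeal.mem_irrelevant_iff, GradedRing.proj_apply]
  have hmem : ((DirectSum.decompose 𝒜 r 0 : R)) ∈ q := hq 0 hr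
  have h𝒜0 : ((DirectSum.decompose 𝒜 r 0 : R)) ∈ 𝒜 0 := Submodule.coe_mem _
  have h𝒜0' : ((DirectSum.decompose 𝒜 r 0 : R)) ∈ Submodule.span k {(1 : R)} :=
    (le_of_eq h0) h𝒜0
  rw [Submodule.mem_span_singleton] at h𝒜0'
  obtain ⟨c, hc⟩ := h𝒜0'
  by_contra hne
  have hc0 : c ≠ 0 := by
    intro h; rw [h, zero_smul] at hc; exact hne hc.symm
  have h1q : (1 : R) ∈ q := by
    have : c⁻¹ • ((DirectSum.decompose 𝒜 r 0 : R)) ∈ q := by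
      rw [Algebra.smul_def]
      exact Ideal.mul_mem_left _ _ hmem
    rwa [← hc, smul_smul, inv_mul_cancel₀ hc0, one_smul] at this
  exact hqt (Ideal.eq_top_of_isUnit_mem q h1q isUnit_one)

-- L3: the crux

lemma stmt18_count {x : R} {n : ℕ} (W : Submodule k R) (hWfd : FiniteDimensional k W)
    (hWle : W ≤ 𝒜 n) (hWI : ∀ r ∈ W, r ∈ Ideal.span {x})
    (hWmem : ∀ r ∈ 𝒜 n, r ∈ Ideal.span {x} → r ∈ W)
    (hstar : ∀ u v : R, u ∈ 𝒜 n → v ∈ 𝒜 n → v ∉ Ideal.span {x} →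
      ∃ lam : k, u - lam • v ∈ Ideal.span {x}) :
    FiniteDimensional k (𝒜 n) ∧
      ((∃ r ∈ 𝒜 n, r ∉ Ideal.span {x}) →
        Module.finrank k (𝒜 n) = 1 + Module.finrank k W) ∧
      (¬ (∃ r ∈ 𝒜 n, r ∉ Ideal.span {x}) →
        Module.finrank k (𝒜 n) = Module.finrank k W) := by
  classical
  set I : Ideal R := Ideal.span {x} with hIdef
  by_cases hS : ∃ r ∈ 𝒜 n, r ∉ I
  · obtain ⟨v, hv, hvI⟩ := hS
    have hv0 : v ≠ 0 := fun h => hvI (h ▸ Submodule.zero_mem I)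
    have hdecomp : 𝒜 n = W ⊔ Submodule.span k {v} := by
      apply le_antisymm
      · intro u hu
        obtain ⟨lam, hlam⟩ := hstar u v hu hv hvI
        have hsub : u - lam • v ∈ 𝒜 n := Submodule.sub_mem _ hu (Submodule.smul_mem _ _ hv)
        have h1 : u - lam • v ∈ W := hWmem _ hsub hlam
        have heq : u = (u - lam • v) + lam • v := by ring
        rw [heq]
        exact Submodule.add_mem _ (Submodule.mem_sup_left h1)
          (Submodule.mem_sup_right (Submodule.smul_mem _ _ (Submodule.mem_span_singleton_self v)))
      · exact sup_le hWle (by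
          rw [Submodule.span_le, Set.singleton_subset_iff]; exact hv)
    have hdisj : W ⊓ Submodule.span k {v} = ⊥ := by
      rw [eq_bot_iff]
      intro r hr
      rw [Submodule.mem_inf] at hr
      obtain ⟨hrW, hrs⟩ := hr
      rw [Submodule.mem_span_singleton] at hrs
      obtain ⟨c, rfl⟩ := hrs
      rcases eq_or_ne c 0 with rfl | hc
      · simp
      · exfalso
        apply hvI
        have h1 : c • v ∈ I := hWI _ hrW
        have h2 : c⁻¹ • (c • v) ∈ I := by
          rw [Algebra.smul_def]
          exact Ideal.mul_mem_left _ _ h1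
        rwa [smul_smul, inv_mul_cancel₀ hc, one_smul] at h2
    haveI hsfd : FiniteDimensional k (Submodule.span k {v}) :=
      FiniteDimensional.span_of_finite k (Set.finite_singleton v)
    haveI := hWfd
    haveI : FiniteDimensional k (W ⊔ Submodule.span k {v} : Submodule k R) :=
      Submodule.finiteDimensional_sup _ _
    have hfd : FiniteDimensional k (𝒜 n) := by rw [hdecomp]; infer_instance
    refine ⟨hfd, fun _ => ?_, fun h => absurd ⟨v, hv, hvI⟩ h⟩
    have hsum := Submodule.finrank_sup_add_finrank_inf_eq W (Submodule.span k {v})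
    rw [hdisj, finrank_bot, add_zero] at hsum
    have hspan : Module.finrank k (Submodule.span k {v}) = 1 :=
      finrank_span_singleton hv0
    have heq : Module.finrank k (𝒜 n) =
        Module.finrank k (W ⊔ Submodule.span k {v} : Submodule k R) := by rw [hdecomp]
    rw [heq, hsum, hspan]
    ring
  · have hdecomp : 𝒜 n = W := by
      apply le_antisymm
      · intro u hu
        push_neg at hS
        exact hWmem _ hu (hS u hu)
      · exact hWle
    haveI := hWfd
    have hfd : FiniteDimensional k (𝒜 n) := by rw [hdecomp]; exact hWfd
    exact ⟨hfd, fun h => absurd h hS, fun _ => by rw [hdecomp]⟩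

lemma stmt18_rank {d : ℕ} (hd : 0 < d) {x : R} (hxd : x ∈ 𝒜 d) (hx : Prime x)
    (hstar : ∀ (n : ℕ) (u v : R), u ∈ 𝒜 n → v ∈ 𝒜 n → v ∉ Ideal.span {x} →
      ∃ lam : k, u - lam • v ∈ Ideal.span {x}) :
    ∀ n : ℕ, FiniteDimensional k (𝒜 n) ∧
      ((∃ r ∈ 𝒜 n, r ∉ Ideal.span {x}) →
        Module.finrank k (𝒜 n) =
          1 + (if d ≤ n then Module.finrank k (𝒜 (n - d)) else 0)) ∧
      (¬ (∃ r ∈ 𝒜 n, r ∉ Ideal.span {x}) →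
        Module.finrank k (𝒜 n) =
          (if d ≤ n then Module.finrank k (𝒜 (n - d)) else 0)) := by
  classical
  intro n
  induction n using Nat.strong_induction_on with
  | _ n ih =>
  have hinj : Function.Injective (LinearMap.mulLeft k x) := by
    intro a b hab
    exact mul_left_cancel₀ hx.ne_zero hab
  by_cases hdn : d ≤ n
  · haveI hprev : FiniteDimensional k (𝒜 (n - d)) := (ih (n - d) (by omega)).1
    set W : Submodule k R := (𝒜 (n - d)).map (LinearMap.mulLeft k x) with hWdef
    have hWfd : FiniteDimensional k W := Module.Finite.map _ _
    have hWrank : Module.finrank k W = Module.finrank k (𝒜 (n - d)) :=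
      (LinearEquiv.finrank_eq (Submodule.equivMapOfInjective _ hinj _)).symm
    have hWle : W ≤ 𝒜 n := by
      rintro _ ⟨y, hy, rfl⟩
      have : x * y ∈ 𝒜 (d + (n - d)) := SetLike.mul_mem_graded hxd hy
      rwa [Nat.add_sub_cancel' hdn] at this
    have hWI : ∀ r ∈ W, r ∈ Ideal.span {x} := by
      rintro _ ⟨y, hy, rfl⟩
      exact Ideal.mul_mem_right _ _ (Ideal.subset_span rfl)
    have hWmem : ∀ r ∈ 𝒜 n, r ∈ Ideal.span {x} → r ∈ W := by
      intro r hr hrI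
      obtain ⟨y, hy, rfl⟩ := stmt18_mem_span_x 𝒜 hxd hr hrI
      exact ⟨y, hy, rfl⟩
    obtain ⟨h1, h2, h3⟩ := stmt18_count 𝒜 W hWfd hWle hWI hWmem (hstar n)
    rw [if_pos hdn]
    exact ⟨h1, fun h => by rw [h2 h, hWrank], fun h => by rw [h3 h, hWrank]⟩
  · set W : Submodule k R := (⊥ : Submodule k R) with hWdef
    have hWfd : FiniteDimensional k W := inferInstance
    have hWmem : ∀ r ∈ 𝒜 n, r ∈ Ideal.span {x} → r ∈ W := by
      intro r hr hrI
      rw [stmt18_small 𝒜 hxd hdn hr hrI]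
      exact Submodule.zero_mem _
    obtain ⟨h1, h2, h3⟩ := stmt18_count 𝒜 W hWfd bot_le (fun r hr => by
      rw [hWdef, Submodule.mem_bot] at hr
      rw [hr]; exact Ideal.zero_mem _) hWmem (hstar n)
    rw [if_neg hdn]
    have hWrank : Module.finrank k W = 0 := finrank_bot k R
    exact ⟨h1, fun h => by rw [h2 h, hWrank], fun h => by rw [h3 h, hWrank]⟩


end Stmt18Aux

lemma stmt18_exists_algHom {k R : Type*} [Field k] [IsAlgClosed k] [CommRing R]
    [Algebra k R] (hft : Algebra.FiniteType k R)
    (p : Ideal R) (hp : p.IsPrime) (v : R) (hv : v ∉ p) :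
    ∃ ψ : R →ₐ[k] k, (∀ a ∈ p, ψ a = 0) ∧ ψ v ≠ 0 := by
  obtain ⟨n, π, hπ⟩ := Algebra.FiniteType.iff_quotient_mvPolynomial''.mp hft
  obtain ⟨V, hV⟩ := hπ v
  set J : Ideal (MvPolynomial (Fin n) k) := p.comap π with hJ
  have hJp : J.IsPrime := Ideal.IsPrime.comap _
  have hVJ : V ∉ J := by
    intro h
    exact hv (hV ▸ Ideal.mem_comap.mp h)
  -- Jacobson: J is the intersection of maximal ideals above it
  have hjac : J.jacobson = J := by
    have : IsJacobsonRing (MvPolynomial (Fin n) k) := inferInstance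
    exact (isJacobsonRing_iff_prime_eq.mp this) J hJp
  have : ∃ M : Ideal (MvPolynomial (Fin n) k), M.IsMaximal ∧ J ≤ M ∧ V ∉ M := by
    by_contra hcon
    push_neg at hcon
    have : V ∈ J.jacobson := by
      rw [Ideal.jacobson]
      rw [Ideal.mem_sInf]
      rintro M ⟨hJM, hM⟩
      exact hcon M hM hJM
    rw [hjac] at this; exact hVJ this
  obtain ⟨M, hM, hJM, hVM⟩ := this
  obtain ⟨pt, hpt⟩ := (MvPolynomial.isMaximal_iff_eq_vanishingIdeal_singleton (I := M)).mp hM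
  -- eval at pt as AlgHom
  set φ : MvPolynomial (Fin n) k →ₐ[k] k := MvPolynomial.aeval pt with hφ
  have hφeval : ∀ q, φ q = MvPolynomial.eval pt q := fun q => by
    rw [hφ, MvPolynomial.aeval_def, Algebra.algebraMap_self]; rfl
  have hker : ∀ q ∈ RingHom.ker π, φ q = 0 := by
    intro q hq
    have hqJ : q ∈ J := by
      have : π q = 0 := hq
      simp [hJ, Ideal.mem_comap, this]
    have : q ∈ M := hJM hqJ
    rw [hpt] at this
    rw [hφeval]
    exact (MvPolynomial.mem_vanishingIdeal_singleton_iff pt q).mp this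
  -- descend to R
  set e := Ideal.quotientKerAlgEquivOfSurjective hπ
  set ψ : R →ₐ[k] k := (Ideal.Quotient.liftₐ (RingHom.ker π) φ hker).comp
    e.symm.toAlgHom with hψ
  have hψπ : ∀ q, ψ (π q) = φ q := by
    intro q
    have he : e (Ideal.Quotient.mk (RingHom.ker π) q) = π q := by
      simp only [e, Ideal.quotientKerAlgEquivOfSurjective]
      exact RingHom.kerLift_mk _ q
    have : e.symm.toAlgHom (π q) = Ideal.Quotient.mk (RingHom.ker π) q := by
      rw [← he]; exact e.symm_apply_apply _
    simp only [hψ, AlgHom.comp_apply, this]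
    exact Ideal.Quotient.liftₐ_apply _ _ _ _
  refine ⟨ψ, ?_, ?_⟩
  · intro a ha
    obtain ⟨q, rfl⟩ := hπ a
    rw [hψπ, hφeval]
    have : q ∈ M := hJM (by simpa [hJ, Ideal.mem_comap] using ha)
    rw [hpt] at this
    exact (MvPolynomial.mem_vanishingIdeal_singleton_iff pt q).mp this
  · rw [← hV, hψπ, hφeval]
    intro h0
    exact hVM (hpt ▸ (MvPolynomial.mem_vanishingIdeal_singleton_iff pt V).mpr h0)

lemma stmt18_dim_ge_chain {R : Type*} [CommRing R]
    (p0 p1 p2 p3 : Ideal R) (h0 : p0.IsPrime) (h1 : p1.IsPrime) (h2 : p2.IsPrime)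
    (h3 : p3.IsPrime) (h01 : p0 < p1) (h12 : p1 < p2) (h23 : p2 < p3) :
    (3 : WithBot ℕ∞) ≤ ringKrullDim R := by
  let f : Fin 4 → PrimeSpectrum R := ![⟨p0, h0⟩, ⟨p1, h1⟩, ⟨p2, h2⟩, ⟨p3, h3⟩]
  have hf : StrictMono f := by
    intro i j hij
    fin_cases i <;> fin_cases j <;>
      first
        | exact absurd hij (by decide)
        | simp only [f]
          first
            | exact (PrimeSpectrum.asIdeal_lt_asIdeal _ _).mp (by simpa using h01)
            | exact (PrimeSpectrum.asIdeal_lt_asIdeal _ _).mp (by simpa using h12)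
            | exact (PrimeSpectrum.asIdeal_lt_asIdeal _ _).mp (by simpa using h23)
            | exact (PrimeSpectrum.asIdeal_lt_asIdeal _ _).mp
                (by simpa using (h01.trans h12))
            | exact (PrimeSpectrum.asIdeal_lt_asIdeal _ _).mp
                (by simpa using (h12.trans h23))
            | exact (PrimeSpectrum.asIdeal_lt_asIdeal _ _).mp
                (by simpa using ((h01.trans h12).trans h23))
  let c : LTSeries (PrimeSpectrum R) := ⟨3, f, fun i => hf (by exact i.castSucc_lt_succ)⟩
  have := Order.LTSeries.length_le_krullDim c
  simpa [ringKrullDim, c] using this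

-- L2b: PID has dim ≤ 1

lemma stmt18_dim_pid_le {R : Type*} [CommRing R] [IsDomain R] [IsPrincipalIdealRing R] :
    ringKrullDim R ≤ 1 := by
  rw [ringKrullDim, Order.krullDim]
  apply iSup_le
  intro c
  by_contra hc
  push_neg at hc
  have h2 : 2 ≤ c.length := by
    by_contra h
    push_neg at h
    interval_cases hl : c.length <;> revert hc <;> simp [hl] <;> decide
  -- extract three primes
  have i0 : Fin (c.length + 1) := ⟨0, by omega⟩
  have lt01 : c.toFun ⟨0, by omega⟩ < c.toFun ⟨1, by omega⟩ := by
    have := c.strictMono (show (⟨0, by omega⟩ : Fin (c.length+1)) < ⟨1, by omega⟩ by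
      simp [Fin.lt_iff_val_lt_val])
    exact this
  have lt12 : c.toFun ⟨1, by omega⟩ < c.toFun ⟨2, by omega⟩ := by
    have := c.strictMono (show (⟨1, by omega⟩ : Fin (c.length+1)) < ⟨2, by omega⟩ by
      simp [Fin.lt_iff_val_lt_val])
    exact this
  set P1 := c.toFun ⟨1, by omega⟩
  have hP1ne : P1.asIdeal ≠ ⊥ := by
    intro hbot
    have := (PrimeSpectrum.asIdeal_lt_asIdeal _ _).mpr lt01
    rw [hbot] at this
    exact (not_lt_bot this)
  haveI : P1.asIdeal.IsPrime := P1.isPrime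
  have hmax : P1.asIdeal.IsMaximal := IsPrime.to_maximal_ideal hP1ne
  have hlt := (PrimeSpectrum.asIdeal_lt_asIdeal _ _).mpr lt12
  have hnt : (c.toFun ⟨2, by omega⟩).asIdeal ≠ ⊤ := Ideal.IsPrime.ne_top (c.toFun ⟨2, by omega⟩).isPrime
  have heq : P1.asIdeal = (c.toFun ⟨2, by omega⟩).asIdeal := hmax.eq_of_le hnt hlt.le
  exact absurd heq (ne_of_lt hlt)


section Stmt18Main

variable {k R : Type*} [Field k] [IsAlgClosed k] [CommRing R] [IsDomain R] [Algebra k R]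
variable (𝒜 : ℕ → Submodule k R) [GradedAlgebra 𝒜]

set_option linter.unusedSectionVars false

lemma stmt18_star (h0 : 𝒜 0 = Submodule.span k {1}) (hft : Algebra.FiniteType k R)
    (hdim : ringKrullDim R = 2)
    {d : ℕ} (hd : 0 < d) {x : R} (hxd : x ∈ 𝒜 d) (hx : Prime x)
    {n : ℕ} {u v : R} (hu : u ∈ 𝒜 n) (hv : v ∈ 𝒜 n) (hvI : v ∉ Ideal.span {x}) :
    ∃ lam : k, u - lam • v ∈ Ideal.span {x} := by
  classical
  have hI : (Ideal.span {x}).IsPrime :=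
    (Ideal.span_singleton_prime hx.ne_zero).mpr hx
  rcases Nat.eq_zero_or_pos n with hn0 | hn
  · -- degree 0 case
    subst hn0
    rw [h0, Submodule.mem_span_singleton] at hu hv
    obtain ⟨a, ha⟩ := hu
    obtain ⟨b, hb⟩ := hv
    have hbne : b ≠ 0 := by
      intro h; rw [h, zero_smul] at hb; exact hvI (hb ▸ Submodule.zero_mem _)
    refine ⟨a / b, ?_⟩
    rw [← ha, ← hb, smul_smul, div_mul_cancel₀ _ hbne, sub_self]
    exact Submodule.zero_mem _
  by_contra hc
  push_neg at hc
  -- case split on existence of intermediate prime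
  by_cases hcase : ∃ P : Ideal R, P.IsPrime ∧ Ideal.span {x} < P ∧ ¬P.IsMaximal
  · obtain ⟨P, hP, hxP, hPm⟩ := hcase
    obtain ⟨M, hM, hPM⟩ := Ideal.exists_le_maximal P hP.ne_top
    have hPMlt : P < M := lt_of_le_of_ne hPM (fun h => hPm (h ▸ hM))
    have hbotx : (⊥ : Ideal R) < Ideal.span {x} := by
      rw [bot_lt_iff_ne_bot, Ne, Ideal.span_singleton_eq_bot]
      exact hx.ne_zero
    have := stmt18_dim_ge_chain ⊥ (Ideal.span {x}) P M
      (Ideal.bot_prime) hI hP hM.isPrime hbotx hxP hPMlt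
    rw [hdim] at this
    norm_num at this
  · push_neg at hcase
    -- every prime strictly containing (x) is maximal
    obtain ⟨ψ, hψI, hψv⟩ := stmt18_exists_algHom hft (Ideal.span {x}) hI v hvI
    set β : k := ψ u / ψ v with hβ
    set w : R := u - β • v with hw
    have hwn : w ∈ 𝒜 n := Submodule.sub_mem _ hu (Submodule.smul_mem _ _ hv)
    have hwI : w ∉ Ideal.span {x} := hc β
    have hψw : ψ w = 0 := by
      rw [hw, map_sub, map_smul, smul_eq_mul, hβ, div_mul_cancel₀ _ hψv, sub_self]
    -- v is in the radical of span {x, w}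
    have hvrad : v ∈ (Ideal.span {x, w}).radical := by
      rw [Ideal.radical_eq_sInf, Ideal.mem_sInf]
      rintro p ⟨hle, hp⟩
      set q : Ideal R := (Ideal.homogeneousCore 𝒜 p).toIdeal with hqdef
      have hqp : q.IsPrime := Ideal.IsPrime.homogeneousCore hp
      have hxq : x ∈ q := Ideal.mem_homogeneousCore_of_homogeneous_of_mem
        ⟨d, hxd⟩ (hle (Ideal.subset_span (by simp)))
      have hwq : w ∈ q := Ideal.mem_homogeneousCore_of_homogeneous_of_mem
        ⟨n, hwn⟩ (hle (Ideal.subset_span (by simp)))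
      have hIq : Ideal.span {x} ≤ q := by
        rw [Ideal.span_le, Set.singleton_subset_iff]; exact hxq
      have hIqlt : Ideal.span {x} < q := lt_of_le_of_ne hIq (by
        intro h; exact hwI (h ▸ hwq))
      have hqmax : q.IsMaximal := hcase q hqp hIqlt
      have hqle : q ≤ (HomogeneousIdeal.irrelevant 𝒜).toIdeal :=
        stmt18_homogeneous_prime_le_irrelevant 𝒜 h0 q
          (Ideal.homogeneousCore 𝒜 p).is_homogeneous' hqp.ne_top
      have hqeq : q = (HomogeneousIdeal.irrelevant 𝒜).toIdeal :=
        hqmax.eq_of_le (stmt18_irrelevant_ne_top 𝒜) hqle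
      have hvq : v ∈ q := by
        rw [hqeq, HomogeneousIdeal.mem_iff]
        exact stmt18_mem_irrelevant 𝒜 hn hv
      exact (Ideal.toIdeal_homogeneousCore_le 𝒜 p) hvq
    obtain ⟨j, hj⟩ := hvrad
    obtain ⟨a, b, hab⟩ := Ideal.mem_span_pair.mp hj
    have := congrArg ψ hab
    rw [map_add, map_mul, map_mul, map_pow] at this
    have hψx : ψ x = 0 := hψI x (Ideal.subset_span rfl)
    rw [hψx, hψw, mul_zero, mul_zero, add_zero] at this
    exact hψv (pow_eq_zero_iff'.mp this.symm).1

lemma stmt18_gap (h0 : 𝒜 0 = Submodule.span k {1})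
    (hdim : ringKrullDim R = 2)
    {d : ℕ} (hd : 0 < d) {x : R} (hxd : x ∈ 𝒜 d) (hx : Prime x) :
    ∃ n : ℕ, 0 < n ∧ ∃ r ∈ 𝒜 n, r ∉ Ideal.span {x} := by
  classical
  by_contra hcon
  push_neg at hcon
  -- then R = k[x]
  have hadj : ∀ n : ℕ, ∀ r ∈ 𝒜 n, r ∈ Algebra.adjoin k ({x} : Set R) := by
    intro n
    induction n using Nat.strong_induction_on with
    | _ n ih =>
      intro r hr
      rcases Nat.eq_zero_or_pos n with h | h
      · subst h
        have : r ∈ Submodule.span k {(1 : R)} := (le_of_eq h0) hr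
        rw [Submodule.mem_span_singleton] at this
        obtain ⟨c, rfl⟩ := this
        rw [Algebra.smul_def, mul_one]
        exact Subalgebra.algebraMap_mem _ c
      · have hrI : r ∈ Ideal.span {x} := hcon n h r hr
        obtain ⟨y, hy, rfl⟩ := stmt18_mem_span_x 𝒜 hxd hr hrI
        exact Subalgebra.mul_mem _ (Algebra.self_mem_adjoin_singleton k x)
          (ih (n - d) (by omega) y hy)
  have htop : Algebra.adjoin k ({x} : Set R) = ⊤ := by
    rw [eq_top_iff]
    intro r _
    rw [← DirectSum.sum_support_decompose 𝒜 r]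
    exact Subalgebra.sum_mem _ fun j _ => hadj j _ (Submodule.coe_mem _)
  -- surjection from k[X]
  have hsurj : Function.Surjective (Polynomial.aeval x : Polynomial k →ₐ[k] R) := by
    intro r
    have : r ∈ (Polynomial.aeval x : Polynomial k →ₐ[k] R).range := by
      rw [← Algebra.adjoin_singleton_eq_range_aeval, htop]; trivial
    exact this
  have hle := ringKrullDim_le_of_surjective
    ((Polynomial.aeval x : Polynomial k →ₐ[k] R) : Polynomial k →+* R) hsurj
  have : ringKrullDim R ≤ 1 := le_trans hle stmt18_dim_pid_le
  rw [hdim] at this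
  norm_num at this


end Stmt18Main

lemma stmt18_semigroup (S : Set ℕ) (hadd : ∀ a ∈ S, ∀ b ∈ S, a + b ∈ S) (h0 : (0 : ℕ) ∈ S)
    {s : ℕ} (hs : 0 < s) (hdvd : ∀ n ∈ S, s ∣ n)
    (hgcd : ∀ m : ℕ, (∀ n ∈ S, m ∣ n) → m ∣ s)
    (hex : ∃ n ∈ S, 0 < n) :
    ∃ N : ℕ, ∀ j : ℕ, N ≤ j → s * j ∈ S := by
  classical
  set T : Set ℕ := {m : ℕ | s * m ∈ S} with hT
  have hT0 : (0 : ℕ) ∈ T := by simp [hT, h0]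
  have hTadd : ∀ a ∈ T, ∀ b ∈ T, a + b ∈ T := by
    intro a ha b hb
    simp only [hT, Set.mem_setOf_eq] at *
    rw [Nat.mul_add]
    exact hadd _ ha _ hb
  have hTmul : ∀ (m : ℕ), ∀ t ∈ T, m * t ∈ T := by
    intro m
    induction m with
    | zero => intro t ht; simpa using hT0
    | succ m ih =>
      intro t ht
      have := hTadd _ (ih t ht) _ ht
      rwa [show m * t + t = (m + 1) * t by ring] at this
  -- subgroup of ℤ generated by T
  set G : AddSubgroup ℤ := AddSubgroup.closure ((fun m : ℕ => (m : ℤ)) '' T) with hG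
  have hGdiff : ∀ z ∈ G, ∃ a ∈ T, ∃ b ∈ T, z = (a : ℤ) - b := by
    intro z hz
    induction hz using AddSubgroup.closure_induction with
    | mem w hw =>
      obtain ⟨a, ha, rfl⟩ := hw
      exact ⟨a, ha, 0, hT0, by simp⟩
    | zero => exact ⟨0, hT0, 0, hT0, by simp⟩
    | add w₁ w₂ h₁ h₂ ih₁ ih₂ =>
      obtain ⟨a₁, ha₁, b₁, hb₁, rfl⟩ := ih₁
      obtain ⟨a₂, ha₂, b₂, hb₂, rfl⟩ := ih₂
      exact ⟨a₁ + a₂, hTadd _ ha₁ _ ha₂, b₁ + b₂, hTadd _ hb₁ _ hb₂, by push_cast; ring⟩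
    | neg w hw ih =>
      obtain ⟨a, ha, b, hb, rfl⟩ := ih
      exact ⟨b, hb, a, ha, by ring⟩
  obtain ⟨g, hgG⟩ := Int.subgroup_cyclic G
  have hgdvd : ∀ t ∈ T, (g : ℤ) ∣ (t : ℤ) := by
    intro t ht
    have : (t : ℤ) ∈ G := AddSubgroup.subset_closure ⟨t, ht, rfl⟩
    rw [hgG] at this
    obtain ⟨c, hc⟩ := AddSubgroup.mem_closure_singleton.mp this
    exact ⟨c, by rw [← hc, smul_eq_mul]; ring⟩
  -- g.natAbs is a common divisor of T, so s * g.natAbs divides s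
  have hcomm : ∀ n ∈ S, s * g.natAbs ∣ n := by
    intro n hn
    obtain ⟨t, rfl⟩ := hdvd n hn
    have ht : t ∈ T := by simpa [hT] using hn
    have := hgdvd t ht
    have h2 : g.natAbs ∣ t := by
      exact Int.natCast_dvd_natCast.mp (Int.natAbs_dvd.mpr this)
    exact mul_dvd_mul_left s h2
  have hna : g.natAbs = 1 := by
    have := hgcd (s * g.natAbs) hcomm
    have h2 : s * g.natAbs ∣ s * 1 := by simpa using this
    have := (mul_dvd_mul_iff_left (by omega : s ≠ 0)).mp h2
    exact Nat.dvd_one.mp this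
  -- 1 ∈ G
  have h1G : (1 : ℤ) ∈ G := by
    rw [hgG]
    rcases Int.natAbs_eq g with h | h
    · rw [h, hna]; exact AddSubgroup.mem_closure_singleton.mpr ⟨1, by simp⟩
    · rw [h, hna]; exact AddSubgroup.mem_closure_singleton.mpr ⟨-1, by simp⟩
  obtain ⟨a, ha, b, hb, hab⟩ := hGdiff 1 h1G
  have hab' : a = b + 1 := by omega
  rcases Nat.eq_zero_or_pos b with hb0 | hbpos
  · -- b = 0, a = 1 ∈ T
    subst hb0
    refine ⟨0, fun j _ => ?_⟩
    have : j * a ∈ T := hTmul j a (by rwa [hab'] at ha ⊢)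
    rw [hab'] at this
    simpa [hT] using this
  · refine ⟨b * b, fun j hj => ?_⟩
    have hq : b * b ≤ j := hj
    set q := j / b with hqdef
    set r := j % b with hrdef
    have hrb : r < b := Nat.mod_lt _ hbpos
    have hqr : j = q * b + r := by
      rw [hqdef, hrdef, mul_comm]; exact (Nat.div_add_mod j b).symm
    have hqge : b ≤ q := by
      have := Nat.div_le_div_right (c := b) hq
      rwa [Nat.mul_div_cancel _ hbpos] at this
    have hrq : r ≤ q := by omega
    have hdecomp : (q - r) * b + r * a = j := by
      rw [hab']
      have h1 : (q - r) * b + r * (b + 1) = (q - r + r) * b + r := by ring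
      rw [h1, Nat.sub_add_cancel hrq, ← hqr]
    have : (q - r) * b + r * a ∈ T :=
      hTadd _ (hTmul _ _ hb) _ (hTmul _ _ ha)
    rwa [hdecomp] at this

lemma stmt18_analysis (a b : ℕ → ℕ) (d s N : ℕ) (hd : 0 < d) (hs : 0 < s)
    (hrec : ∀ n, a n = b n + (if d ≤ n then a (n - d) else 0))
    (hble : ∀ n, b n ≤ 1)
    (hbdvd : ∀ n, b n ≠ 0 → s ∣ n)
    (hbN : ∀ j, N ≤ j → b (s * j) = 1) :
    Filter.Tendsto (fun t : ℝ => (1 - t) ^ 2 * ∑' n : ℕ, (a n : ℝ) * t ^ n)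
      (nhdsWithin 1 (Set.Iio 1)) (nhds (1 / ((s : ℝ) * (d : ℝ)))) := by
  classical
  have habound : ∀ n, a n ≤ n + 1 := by
    intro n
    induction n using Nat.strong_induction_on with
    | _ n ih =>
      rw [hrec n]
      by_cases hdn : d ≤ n
      · rw [if_pos hdn]
        have := ih (n - d) (by omega)
        have := hble n
        omega
      · rw [if_neg hdn]
        have := hble n
        omega
  -- the closed form function
  set P : ℝ → ℝ := fun t => ∑ i ∈ Finset.range (s * N), (b i : ℝ) * t ^ i with hP
  set E : ℝ → ℝ := fun t => ∑ i ∈ Finset.range s, t ^ i with hE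
  set D : ℝ → ℝ := fun t => ∑ i ∈ Finset.range d, t ^ i with hD
  set Φ : ℝ → ℝ := fun t => ((1 - t) * P t + t ^ (s * N) / E t) / D t with hΦ
  -- pointwise identity on Ioo 0 1
  have hkey : ∀ t : ℝ, t ∈ Set.Ioo (0 : ℝ) 1 →
      (1 - t) ^ 2 * ∑' n : ℕ, (a n : ℝ) * t ^ n = Φ t := by
    rintro t ⟨ht0, ht1⟩
    have htn : (0 : ℝ) ≤ t := ht0.le
    have htabs : ‖t‖ < 1 := by rw [Real.norm_eq_abs, abs_of_pos ht0]; exact ht1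
    have hgeo : Summable fun n : ℕ => t ^ n := summable_geometric_of_lt_one htn ht1
    have hn1 : Summable (fun n : ℕ => ((n : ℝ) + 1) * t ^ n) := by
      have h1 : Summable (fun n : ℕ => (n : ℝ) * t ^ n) := by
        simpa using summable_pow_mul_geometric_of_norm_lt_one 1 htabs
      exact (h1.add hgeo).congr fun n => by ring
    have hsumA : Summable (fun n : ℕ => (a n : ℝ) * t ^ n) := by
      apply Summable.of_nonneg_of_le (fun n => by positivity) _ hn1
      intro n
      apply mul_le_mul_of_nonneg_right _ (by positivity)
      exact_mod_cast habound n
    have hsumB : Summable (fun n : ℕ => (b n : ℝ) * t ^ n) := by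
      apply Summable.of_nonneg_of_le (fun n => by positivity) _ hn1
      intro n
      apply mul_le_mul_of_nonneg_right _ (by positivity)
      have := hble n
      have : (b n : ℝ) ≤ 1 := by exact_mod_cast this
      linarith [show ((0:ℝ)) ≤ (n:ℝ) from Nat.cast_nonneg n]
    have hsumC : Summable (fun n : ℕ => (if d ≤ n then (a (n - d) : ℝ) else 0) * t ^ n) := by
      apply Summable.of_nonneg_of_le (fun n => by positivity) _ hn1
      intro n
      apply mul_le_mul_of_nonneg_right _ (by positivity)
      split
      · next h =>
        have := habound (n - d)
        have h2 : ((a (n - d) : ℝ)) ≤ (n - d : ℕ) + 1 := by exact_mod_cast this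
        have h3 : ((n - d : ℕ) : ℝ) ≤ (n : ℝ) := by exact_mod_cast Nat.sub_le n d
        linarith
      · positivity
    -- recurrence identity
    have hAeq : (∑' n : ℕ, (a n : ℝ) * t ^ n) =
        (∑' n : ℕ, (b n : ℝ) * t ^ n) + t ^ d * ∑' n : ℕ, (a n : ℝ) * t ^ n := by
      have h1 : ∀ n : ℕ, (a n : ℝ) * t ^ n =
          (b n : ℝ) * t ^ n + (if d ≤ n then (a (n - d) : ℝ) else 0) * t ^ n := by
        intro n
        rw [hrec n]
        push_cast
        split_ifs <;> push_cast <;> ring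
      have step1 : (∑' n : ℕ, (a n : ℝ) * t ^ n) =
          (∑' n : ℕ, (b n : ℝ) * t ^ n) +
          ∑' n : ℕ, (if d ≤ n then (a (n - d) : ℝ) else 0) * t ^ n :=
        (tsum_congr h1).trans (Summable.tsum_add hsumB hsumC)
      refine step1.trans ?_
      congr 1
      -- ∑' c = t^d * A
      have h2 := (Summable.sum_add_tsum_nat_add (f := fun n : ℕ =>
        (if d ≤ n then (a (n - d) : ℝ) else 0) * t ^ n) d hsumC).symm
      rw [h2]
      have h3 : (∑ i ∈ Finset.range d,
          (if d ≤ i then (a (i - d) : ℝ) else 0) * t ^ i) = 0 := by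
        apply Finset.sum_eq_zero
        intro i hi
        rw [Finset.mem_range] at hi
        rw [if_neg (by omega), zero_mul]
      rw [h3, zero_add]
      have h4 : ∀ n : ℕ, (if d ≤ n + d then (a (n + d - d) : ℝ) else 0) * t ^ (n + d) =
          t ^ d * ((a n : ℝ) * t ^ n) := by
        intro n
        rw [if_pos (by omega), Nat.add_sub_cancel, pow_add]
        ring
      rw [tsum_congr h4, tsum_mul_left]
    -- geometric identity for B
    have hBeq : (∑' n : ℕ, (b n : ℝ) * t ^ n) = P t + t ^ (s * N) * (1 - t ^ s)⁻¹ := by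
      have h2 := (Summable.sum_add_tsum_nat_add (f := fun n : ℕ => (b n : ℝ) * t ^ n)
        (s * N) hsumB).symm
      rw [h2, hP]
      congr 1
      have hinj : Function.Injective (fun j : ℕ => s * j) :=
        fun i j hij => Nat.eq_of_mul_eq_mul_left hs hij
      have hoff : ∀ n : ℕ, n ∉ Set.range (fun j : ℕ => s * j) →
          (b (n + s * N) : ℝ) * t ^ (n + s * N) = 0 := by
        intro n hn
        rcases eq_or_ne (b (n + s * N)) 0 with h | h
        · rw [h]; simp
        · exfalso
          obtain ⟨c, hc⟩ := hbdvd _ h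
          apply hn
          have hcN : N ≤ c := Nat.le_of_mul_le_mul_left (by omega) hs
          refine ⟨c - N, ?_⟩
          simp only
          have h7 : s * (c - N) + s * N = s * c := by
            rw [← Nat.mul_add, Nat.sub_add_cancel hcN]
          omega
      have h5 := Function.Injective.tsum_eq (f := fun n : ℕ =>
        (b (n + s * N) : ℝ) * t ^ (n + s * N)) hinj (by
          intro n hn
          rw [Function.mem_support] at hn
          by_contra hnr
          exact hn (hoff n hnr))
      rw [← h5]
      have h6 : ∀ j : ℕ, (b (s * j + s * N) : ℝ) * t ^ (s * j + s * N) =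
          (t ^ s) ^ j * t ^ (s * N) := by
        intro j
        have : s * j + s * N = s * (j + N) := by ring
        rw [this, hbN (j + N) (by omega)]
        rw [Nat.cast_one, one_mul, ← pow_mul]
        rw [show s * (j + N) = s * j + s * N by ring, pow_add, pow_mul]
      calc (∑' j : ℕ, (b (s * j + s * N) : ℝ) * t ^ (s * j + s * N))
          = ∑' j : ℕ, (t ^ s) ^ j * t ^ (s * N) := tsum_congr h6
        _ = (∑' j : ℕ, (t ^ s) ^ j) * t ^ (s * N) := tsum_mul_right
        _ = t ^ (s * N) * (1 - t ^ s)⁻¹ := by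
            rw [tsum_geometric_of_lt_one (by positivity) (pow_lt_one₀ htn ht1 (by omega))]
            ring
    -- algebra
    have h1t : (1 : ℝ) - t ≠ 0 := by intro h; nlinarith
    have hDpos : 0 < D t := by
      rw [hD]
      apply Finset.sum_pos (fun i _ => by positivity)
      exact ⟨0, Finset.mem_range.mpr hd⟩
    have hEpos : 0 < E t := by
      rw [hE]
      apply Finset.sum_pos (fun i _ => by positivity)
      exact ⟨0, Finset.mem_range.mpr hs⟩
    have hD0 : D t ≠ 0 := hDpos.ne'
    have hE0 : E t ≠ 0 := hEpos.ne'
    have hDgeom : (1 : ℝ) - t ^ d = (1 - t) * D t := by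
      have := geom_sum_mul (x := t) (n := d)
      rw [hD]
      nlinarith [this]
    have hEgeom : (1 : ℝ) - t ^ s = (1 - t) * E t := by
      have := geom_sum_mul (x := t) (n := s)
      rw [hE]
      nlinarith [this]
    have hts1 : (1 : ℝ) - t ^ s ≠ 0 := by
      rw [hEgeom]
      exact mul_ne_zero h1t hE0
    set A : ℝ := ∑' n : ℕ, (a n : ℝ) * t ^ n with hA
    set B : ℝ := ∑' n : ℕ, (b n : ℝ) * t ^ n with hB
    have eq1 : A * ((1 - t) * D t) = B := by
      rw [← hDgeom]
      linear_combination hAeq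
    have eq2 : B * ((1 - t) * E t) = P t * ((1 - t) * E t) + t ^ (s * N) := by
      rw [← hEgeom, hBeq]
      field_simp
    rw [hΦ]
    simp only
    rw [eq_div_iff hD0]
    refine mul_right_cancel₀ hE0 ?_
    rw [add_mul, div_mul_cancel₀ _ hE0]
    linear_combination ((1 - t) * E t) * eq1 + eq2
  -- limit of the closed form
  have hΦlim : Filter.Tendsto Φ (nhds 1) (nhds (1 / ((s : ℝ) * (d : ℝ)))) := by
    have hcP : Continuous P := by
      rw [hP]
      exact continuous_finset_sum _ fun i _ => continuous_const.mul (continuous_pow i)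
    have hcE : Continuous E := by
      rw [hE]
      exact continuous_finset_sum _ fun i _ => continuous_pow i
    have hcD : Continuous D := by
      rw [hD]
      exact continuous_finset_sum _ fun i _ => continuous_pow i
    have hE1 : E 1 = (s : ℝ) := by simp [hE]
    have hD1 : D 1 = (d : ℝ) := by simp [hD]
    have hΦc : ContinuousAt Φ 1 := by
      apply ContinuousAt.div
      · apply ContinuousAt.add
        · exact (continuousAt_const.sub continuousAt_id).mul hcP.continuousAt
        · exact ContinuousAt.div (continuousAt_pow _ _) hcE.continuousAt
            (by rw [hE1]; exact_mod_cast hs.ne')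
      · exact hcD.continuousAt
      · rw [hD1]; exact_mod_cast hd.ne'
    have hval : Φ 1 = 1 / ((s : ℝ) * (d : ℝ)) := by
      rw [hΦ]
      simp only [hE1, hD1, sub_self, zero_mul, one_pow, zero_add]
      rw [div_div]
    rw [← hval]
    exact hΦc.tendsto
  -- conclude
  apply Filter.Tendsto.congr' _ (hΦlim.mono_left nhdsWithin_le_nhds)
  have hmem : Set.Ioo (0 : ℝ) 1 ∈ nhdsWithin 1 (Set.Iio 1) :=
    Ioo_mem_nhdsLT_of_mem (by norm_num : (1 : ℝ) ∈ Set.Ioc 0 1)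
  filter_upwards [hmem] with t ht
  exact (hkey t ht).symm


/-- Let `R` be a normal ℕ-graded domain of Krull dimension 2 with
irredundant grading, finitely generated over `R₀ = k` an algebraically closed field.
If `x ∈ R_d` (`d > 0`) is a prime element and `s` is the gcd of the degrees in which
`R/xR` is nonzero, then `lim_{t→1⁻} (1−t)² · Σ_{n} dim_k(R_n) tⁿ = 1/(sd)`. -/
theorem stmt_18 {k R : Type*} [Field k] [IsAlgClosed k] [CommRing R] [IsDomain R]
    [IsIntegrallyClosed R] [Algebra k R]
    (𝒜 : ℕ → Submodule k R) [GradedAlgebra 𝒜]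
    (h0 : 𝒜 0 = Submodule.span k {1})
    (hft : Algebra.FiniteType k R)
    (hdim : ringKrullDim R = 2)
    (hirr : ∀ m : ℕ, (∀ n : ℕ, 𝒜 n ≠ ⊥ → m ∣ n) → m = 1)
    (d : ℕ) (hd : 0 < d) (x : R) (hxd : x ∈ 𝒜 d) (hx : Prime x)
    (s : ℕ)
    (hs1 : ∀ n : ℕ, (∃ r ∈ 𝒜 n, r ∉ Ideal.span {x}) → s ∣ n)
    (hs2 : ∀ m : ℕ, (∀ n : ℕ, (∃ r ∈ 𝒜 n, r ∉ Ideal.span {x}) → m ∣ n) → m ∣ s) :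
    Filter.Tendsto
      (fun t : ℝ => (1 - t) ^ 2 * ∑' n : ℕ, (Module.finrank k (𝒜 n) : ℝ) * t ^ n)
      (nhdsWithin 1 (Set.Iio 1))
      (nhds (1 / ((s : ℝ) * (d : ℝ)))) := by
  classical
  have hI : (Ideal.span {x}).IsPrime :=
    (Ideal.span_singleton_prime hx.ne_zero).mpr hx
  -- the crux
  have hstar : ∀ (n : ℕ) (u v : R), u ∈ 𝒜 n → v ∈ 𝒜 n → v ∉ Ideal.span {x} →
      ∃ lam : k, u - lam • v ∈ Ideal.span {x} := fun n u v hu hv hvI =>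
    stmt18_star 𝒜 h0 hft hdim hd hxd hx hu hv hvI
  have hrank := stmt18_rank 𝒜 hd hxd hx hstar
  -- the coefficient sequences
  set a : ℕ → ℕ := fun n => Module.finrank k (𝒜 n) with ha
  set b : ℕ → ℕ := fun n => if ∃ r ∈ 𝒜 n, r ∉ Ideal.span {x} then 1 else 0 with hb
  have hrec : ∀ n, a n = b n + (if d ≤ n then a (n - d) else 0) := by
    intro n
    obtain ⟨_, h2, h3⟩ := hrank n
    by_cases hS : ∃ r ∈ 𝒜 n, r ∉ Ideal.span {x}
    · rw [ha, hb]
      simp only [if_pos hS]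
      exact h2 hS
    · rw [ha, hb]
      simp only [if_neg hS, Nat.zero_add]
      exact h3 hS
  have hble : ∀ n, b n ≤ 1 := by
    intro n; simp only [hb]; split <;> omega
  have hbdvd : ∀ n, b n ≠ 0 → s ∣ n := by
    intro n hn
    simp only [hb] at hn
    by_cases hS : ∃ r ∈ 𝒜 n, r ∉ Ideal.span {x}
    · exact hs1 n hS
    · rw [if_neg hS] at hn; omega
  -- the semigroup of degrees
  obtain ⟨n₀, hn₀pos, hn₀⟩ := stmt18_gap 𝒜 h0 hdim hd hxd hx
  have hspos : 0 < s := by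
    rcases Nat.eq_zero_or_pos s with h | h
    · exfalso
      have := hs1 n₀ hn₀
      rw [h] at this
      omega
    · exact h
  set S : Set ℕ := {n : ℕ | ∃ r ∈ 𝒜 n, r ∉ Ideal.span {x}} with hSdef
  have hadd : ∀ p ∈ S, ∀ q ∈ S, p + q ∈ S := by
    rintro p ⟨r₁, hr₁, hr₁I⟩ q ⟨r₂, hr₂, hr₂I⟩
    refine ⟨r₁ * r₂, SetLike.mul_mem_graded hr₁ hr₂, ?_⟩
    intro hmem
    rcases hI.mem_or_mem hmem with h | h
    · exact hr₁I h
    · exact hr₂I h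
  have h0S : (0 : ℕ) ∈ S := by
    refine ⟨1, SetLike.one_mem_graded 𝒜, ?_⟩
    intro hmem
    rw [← Ideal.eq_top_iff_one] at hmem
    exact hI.ne_top hmem
  obtain ⟨N, hN⟩ := stmt18_semigroup S hadd h0S hspos
    (fun n hn => hs1 n hn) (fun m hm => hs2 m (fun n hn => hm n hn)) ⟨n₀, hn₀, hn₀pos⟩
  have hbN : ∀ j, N ≤ j → b (s * j) = 1 := by
    intro j hj
    simp only [hb]
    exact if_pos (hN j hj)
  exact stmt18_analysis a b d s N hd hspos hrec hble hbdvd hbN
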